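/- Let f : [0,T) → [0,∞) be continuous with ∫₀ᵗ f(s)ds ≤ B for all t ∈ [0,T), and let y solve y' = -y² + (f(t)+1)y, y(0)=1. Then y(t) ≤ e^{B+1} for all t ∈ [0,T). -/

import Mathlib

open MeasureTheory
open scoped ENNReal

theorem stmt_2 (f : ℝ → ℝ) (T : ℝ≥0∞) (hT : 0 < T) (B : ℝ) (hB : 0 < B)
    (hf : Continuous f) (hf0 : ∀ t : ℝ, 0 ≤ t → 0 ≤ f t)
    (hint : ∀ t : ℝ, 0 ≤ t → ENNReal.ofReal t < T → (∫ s in (0:ℝ)..t, f s) ≤ B)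
    (y : ℝ → ℝ) (hy0 : y 0 = 1)
    (hypos : ∀ t : ℝ, 0 ≤ t → ENNReal.ofReal t < T → 0 < y t)
    (hy : ∀ t : ℝ, 0 ≤ t → ENNReal.ofReal t < T →
      HasDerivAt y (-(y t)^2 + (f t + 1) * y t) t) :
    ∀ t : ℝ, 0 ≤ t → ENNReal.ofReal t < T → y t ≤ Real.exp (B + 1) := by
  intro t ht0 htT
  set F : ℝ → ℝ := fun u => ∫ s in (0:ℝ)..u, f s with hF
  have hFd : ∀ u : ℝ, HasDerivAt F (f u) u := fun u =>
    (hf.integral_hasStrictDerivAt 0 u).hasDerivAt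
  have hFcont : Continuous F := continuous_iff_continuousAt.mpr fun u => (hFd u).continuousAt
  have hmem : ∀ s : ℝ, 0 ≤ s → s ≤ t → ENNReal.ofReal s < T := fun s hs0 hst =>
    lt_of_le_of_lt (ENNReal.ofReal_le_ofReal hst) htT
  set E : ℝ → ℝ := fun s => Real.exp (F s + s) with hE
  have hEcont : Continuous E := (hFcont.add continuous_id).rexp
  have hEd : ∀ s : ℝ, HasDerivAt E (E s * (f s + 1)) s := fun s =>
    ((hFd s).add (hasDerivAt_id s)).exp
  set g : ℝ → ℝ := fun s => (y s)⁻¹ * E s - ∫ u in (0:ℝ)..s, E u with hg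
  -- g has derivative 0 on the relevant region
  have hgd : ∀ s : ℝ, 0 ≤ s → s ≤ t → HasDerivAt g 0 s := by
    intro s hs0 hst
    have hsT := hmem s hs0 hst
    have hys := hy s hs0 hsT
    have hpos := hypos s hs0 hsT
    have hzd : HasDerivAt (fun u => (y u)⁻¹)
        (-(-(y s)^2 + (f s + 1) * y s) / (y s)^2) s := hys.inv hpos.ne'
    have hId : HasDerivAt (fun s => ∫ u in (0:ℝ)..s, E u) (E s) s :=
      (hEcont.integral_hasStrictDerivAt 0 s).hasDerivAt
    have := (hzd.mul (hEd s)).sub hId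
    convert this using 1
    have hy0' : y s ≠ 0 := hpos.ne'
    case e'_9 =>
      field_simp
      ring
    all_goals rfl
  -- g is constant on [0,t]
  have hgconst : g t = g 0 := by
    have hcont : ContinuousOn g (Set.Icc 0 t) := fun s hs =>
      ((hgd s hs.1 hs.2).continuousAt).continuousWithinAt
    have := constant_of_has_deriv_right_zero hcont
      (fun s hs => ((hgd s hs.1 hs.2.le).hasDerivWithinAt))
    exact this t ⟨ht0, le_rfl⟩
  have hF0 : F 0 = 0 := intervalIntegral.integral_same
  have hg0 : g 0 = 1 := by
    simp [hg, hE, hF0, hy0]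
  -- lower bound on the integral
  have hFnn : ∀ u : ℝ, 0 ≤ u → 0 ≤ F u := fun u hu =>
    intervalIntegral.integral_nonneg hu (fun x hx => hf0 x hx.1)
  have hIlow : Real.exp t - 1 ≤ ∫ u in (0:ℝ)..t, E u := by
    have h1 : (∫ u in (0:ℝ)..t, Real.exp u) ≤ ∫ u in (0:ℝ)..t, E u := by
      apply intervalIntegral.integral_mono_on ht0
        (Real.continuous_exp.intervalIntegrable 0 t) (hEcont.intervalIntegrable 0 t)
      intro x hx
      exact Real.exp_le_exp.mpr (by linarith [hFnn x hx.1])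
    rwa [integral_exp, Real.exp_zero] at h1
  -- put things together
  have hpos := hypos t ht0 htT
  have key : Real.exp t ≤ (y t)⁻¹ * E t := by
    have : g t = 1 := hgconst.trans hg0
    have ht' : (y t)⁻¹ * E t = 1 + ∫ u in (0:ℝ)..t, E u := by
      rw [hg] at this; dsimp at this; linarith
    rw [ht']; linarith
  have hFB : F t ≤ B := hint t ht0 htT
  have hinv : Real.exp (-B) ≤ (y t)⁻¹ := by
    have hEt : E t = Real.exp (F t + t) := rfl
    have h1 : Real.exp t / E t ≤ (y t)⁻¹ := by
      rw [div_le_iff₀ (by positivity)]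
      calc Real.exp t ≤ (y t)⁻¹ * E t := key
        _ = (y t)⁻¹ * E t := rfl
    calc Real.exp (-B) ≤ Real.exp (-F t) := Real.exp_le_exp.mpr (by linarith)
      _ = Real.exp t / E t := by rw [hEt, ← Real.exp_sub]; ring_nf
      _ ≤ (y t)⁻¹ := h1
  have hyB : y t ≤ Real.exp B := by
    have h2 : y t * Real.exp (-B) ≤ y t * (y t)⁻¹ :=
      mul_le_mul_of_nonneg_left hinv hpos.le
    rw [mul_inv_cancel₀ hpos.ne'] at h2
    have h3 : Real.exp (-B) * Real.exp B = 1 := by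
      rw [← Real.exp_add]; simp
    nlinarith [Real.exp_pos B, Real.exp_pos (-B)]
  exact hyB.trans (Real.exp_le_exp.mpr (by linarith))
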